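/- For t > 0, the function U(x,t) = ln(Φ_{2,1}(x,t)/Φ_{1,1}(x,t)) + x²/(4t) − (5/2)ln t, where Φ_{1,1}(x,t) = x and Φ_{2,1}(x,t) = x² − 2t (the cases φ_1 = x, φ_2 = x² − 2t of the polynomials generated by exp(xλ − tλ²)), satisfies the dispersive water wave equation U_tt + 2U_t U_xx + 4U_x U_xt + 6U_x² U_xx − U_xxxx = 0 wherever x ≠ 0 and x² ≠ 2t. -/

import Mathlib

/-- Partial derivative with respect to the first (space) variable. -/
noncomputable def pdx (U : ℝ → ℝ → ℝ) (x t : ℝ) : ℝ := deriv (fun y => U y t) x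

/-- Partial derivative with respect to the second (time) variable. -/
noncomputable def pdt (U : ℝ → ℝ → ℝ) (x t : ℝ) : ℝ := deriv (fun s => U x s) t

/-- The dispersive water wave equation
`U_tt + 2 U_t U_xx + 4 U_x U_xt + 6 U_x² U_xx - U_xxxx = 0` at the point `(x,t)`. -/
def DWWEq (U : ℝ → ℝ → ℝ) (x t : ℝ) : Prop :=
  pdt (pdt U) x t + 2 * pdt U x t * pdx (pdx U) x t
    + 4 * pdx U x t * pdt (pdx U) x t
    + 6 * (pdx U x t) ^ 2 * pdx (pdx U) x t
    - pdx (pdx (pdx (pdx U))) x t = 0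

/-- The modified Boussinesq equation
`(1/3) U_tt - 2 U_t U_xx - 6 U_x² U_xx + U_xxxx = 0` at the point `(x,t)`. -/
def MBQEq (U : ℝ → ℝ → ℝ) (x t : ℝ) : Prop :=
  (1 / 3) * pdt (pdt U) x t - 2 * pdt U x t * pdx (pdx U) x t
    - 6 * (pdx U x t) ^ 2 * pdx (pdx U) x t
    + pdx (pdx (pdx (pdx U))) x t = 0

/-! ### Auxiliary definitions: closed forms of the derivatives -/

noncomputable def dwwU : ℝ → ℝ → ℝ := fun x t =>
  Real.log ((x ^ 2 - 2 * t) / x) + x ^ 2 / (4 * t) - (5 / 2) * Real.log t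

noncomputable def dwwF (x t : ℝ) : ℝ :=
  Real.log (x ^ 2 - 2 * t) - Real.log x + x ^ 2 / (4 * t) - 5 / 2 * Real.log t

noncomputable def dfx (x t : ℝ) : ℝ := 2 * x / (x ^ 2 - 2 * t) - 1 / x + x / (2 * t)
noncomputable def dfxx (x t : ℝ) : ℝ :=
  2 / (x ^ 2 - 2 * t) - 4 * x ^ 2 / (x ^ 2 - 2 * t) ^ 2 + 1 / x ^ 2 + 1 / (2 * t)
noncomputable def dfxxx (x t : ℝ) : ℝ :=
  -(12 * x) / (x ^ 2 - 2 * t) ^ 2 + 16 * x ^ 3 / (x ^ 2 - 2 * t) ^ 3 - 2 / x ^ 3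
noncomputable def dfxxxx (x t : ℝ) : ℝ :=
  -12 / (x ^ 2 - 2 * t) ^ 2 + 96 * x ^ 2 / (x ^ 2 - 2 * t) ^ 3
    - 96 * x ^ 4 / (x ^ 2 - 2 * t) ^ 4 + 6 / x ^ 4
noncomputable def dft (x t : ℝ) : ℝ := -2 / (x ^ 2 - 2 * t) - x ^ 2 / (4 * t ^ 2) - 5 / 2 / t
noncomputable def dftt (x t : ℝ) : ℝ :=
  -4 / (x ^ 2 - 2 * t) ^ 2 + x ^ 2 / (2 * t ^ 3) + 5 / 2 / t ^ 2
noncomputable def dftx (x t : ℝ) : ℝ := 4 * x / (x ^ 2 - 2 * t) ^ 2 - x / (2 * t ^ 2)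

section Derivs

variable {x t : ℝ}

lemma hqd : HasDerivAt (fun y : ℝ => y ^ 2 - 2 * t) (2 * x) x := by
  simpa using (hasDerivAt_pow 2 x).sub_const (2 * t)

lemma hqdt : HasDerivAt (fun s : ℝ => x ^ 2 - 2 * s) (-2) t := by
  simpa using ((hasDerivAt_id t).const_mul 2).const_sub (x ^ 2)

lemma hF_x (hx : x ≠ 0) (ht : t ≠ 0) (hq : x ^ 2 - 2 * t ≠ 0) :
    HasDerivAt (fun y => dwwF y t) (dfx x t) x := by
  have h1 : HasDerivAt (fun y : ℝ => Real.log (y ^ 2 - 2 * t)) (2 * x / (x ^ 2 - 2 * t)) x :=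
    hqd.log hq
  have h2 : HasDerivAt Real.log x⁻¹ x := Real.hasDerivAt_log hx
  have h3 : HasDerivAt (fun y : ℝ => y ^ 2 / (4 * t)) ((2 * x) / (4 * t)) x := by
    simpa using (hasDerivAt_pow 2 x).div_const (4 * t)
  have := ((h1.sub h2).add h3).sub_const (5 / 2 * Real.log t)
  refine this.congr_deriv ?_
  unfold dfx
  field_simp
  ring

lemma hF_t (ht : t ≠ 0) (hq : x ^ 2 - 2 * t ≠ 0) :
    HasDerivAt (fun s => dwwF x s) (dft x t) t := by
  have h1 : HasDerivAt (fun s : ℝ => Real.log (x ^ 2 - 2 * s)) (-2 / (x ^ 2 - 2 * t)) t :=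
    hqdt.log hq
  have h3 : HasDerivAt (fun s : ℝ => x ^ 2 / (4 * s))
      ((0 * (4 * t) - x ^ 2 * (4 * 1)) / (4 * t) ^ 2) t :=
    (hasDerivAt_const t (x ^ 2)).div ((hasDerivAt_id t).const_mul 4) (by simp [ht])
  have h4 : HasDerivAt (fun s : ℝ => 5 / 2 * Real.log s) (5 / 2 * t⁻¹) t :=
    (Real.hasDerivAt_log ht).const_mul (5 / 2)
  have := ((h1.sub_const (Real.log x)).add h3).sub h4
  refine this.congr_deriv ?_
  unfold dft
  field_simp
  ring

lemma hfx_x (hx : x ≠ 0) (ht : t ≠ 0) (hq : x ^ 2 - 2 * t ≠ 0) :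
    HasDerivAt (fun y => dfx y t) (dfxx x t) x := by
  have h1 := (((hasDerivAt_id x).const_mul 2).div hqd hq :
    HasDerivAt (fun y : ℝ => 2 * y / (y ^ 2 - 2 * t)) _ x)
  have h2 := ((hasDerivAt_const x 1).div (hasDerivAt_id x) hx :
    HasDerivAt (fun y : ℝ => 1 / y) _ x)
  have h3 := ((hasDerivAt_id x).div_const (2 * t) :
    HasDerivAt (fun y : ℝ => y / (2 * t)) _ x)
  have := (h1.sub h2).add h3
  refine this.congr_deriv ?_
  unfold dfxx
  simp only [id]
  field_simp
  ring

lemma hfxx_x (hx : x ≠ 0) (hq : x ^ 2 - 2 * t ≠ 0) :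
    HasDerivAt (fun y => dfxx y t) (dfxxx x t) x := by
  have hq2 : (x ^ 2 - 2 * t) ^ 2 ≠ 0 := pow_ne_zero _ hq
  have h1 := ((hasDerivAt_const x 2).div hqd hq :
    HasDerivAt (fun y : ℝ => 2 / (y ^ 2 - 2 * t)) _ x)
  have h2 := (((hasDerivAt_pow 2 x).const_mul 4).div (hqd.pow 2) hq2 :
    HasDerivAt (fun y : ℝ => 4 * y ^ 2 / (y ^ 2 - 2 * t) ^ 2) _ x)
  have h3 := ((hasDerivAt_const x 1).div (hasDerivAt_pow 2 x) (pow_ne_zero 2 hx) :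
    HasDerivAt (fun y : ℝ => 1 / y ^ 2) _ x)
  have := (((h1.sub h2).add h3).add_const (1 / (2 * t)))
  refine this.congr_deriv ?_
  unfold dfxxx
  field_simp
  ring

lemma hfxxx_x (hx : x ≠ 0) (hq : x ^ 2 - 2 * t ≠ 0) :
    HasDerivAt (fun y => dfxxx y t) (dfxxxx x t) x := by
  have hq2 : (x ^ 2 - 2 * t) ^ 2 ≠ 0 := pow_ne_zero _ hq
  have hq3 : (x ^ 2 - 2 * t) ^ 3 ≠ 0 := pow_ne_zero _ hq
  have h1 := ((((hasDerivAt_id x).const_mul 12).neg).div (hqd.pow 2) hq2 :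
    HasDerivAt (fun y : ℝ => -(12 * y) / (y ^ 2 - 2 * t) ^ 2) _ x)
  have h2 := (((hasDerivAt_pow 3 x).const_mul 16).div (hqd.pow 3) hq3 :
    HasDerivAt (fun y : ℝ => 16 * y ^ 3 / (y ^ 2 - 2 * t) ^ 3) _ x)
  have h3 := ((hasDerivAt_const x 2).div (hasDerivAt_pow 3 x) (pow_ne_zero 3 hx) :
    HasDerivAt (fun y : ℝ => 2 / y ^ 3) _ x)
  have := (h1.add h2).sub h3
  refine this.congr_deriv ?_
  unfold dfxxxx
  simp only [id, Pi.neg_apply]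
  field_simp
  ring

lemma hfx_t (ht : t ≠ 0) (hq : x ^ 2 - 2 * t ≠ 0) :
    HasDerivAt (fun s => dfx x s) (dftx x t) t := by
  have h1 := ((hasDerivAt_const t (2 * x)).div hqdt hq :
    HasDerivAt (fun s : ℝ => 2 * x / (x ^ 2 - 2 * s)) _ t)
  have h3 := ((hasDerivAt_const t x).div ((hasDerivAt_id t).const_mul 2) (by simp [ht]) :
    HasDerivAt (fun s : ℝ => x / (2 * s)) _ t)
  have := (h1.sub_const (1 / x)).add h3
  refine this.congr_deriv ?_
  unfold dftx
  field_simp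
  ring

lemma hft_t (ht : t ≠ 0) (hq : x ^ 2 - 2 * t ≠ 0) :
    HasDerivAt (fun s => dft x s) (dftt x t) t := by
  have h1 := ((hasDerivAt_const t (-2)).div hqdt hq :
    HasDerivAt (fun s : ℝ => -2 / (x ^ 2 - 2 * s)) _ t)
  have h2 := ((hasDerivAt_const t (x ^ 2)).div ((hasDerivAt_pow 2 t).const_mul 4)
      (by positivity) :
    HasDerivAt (fun s : ℝ => x ^ 2 / (4 * s ^ 2)) _ t)
  have h3 := ((hasDerivAt_const t (5 / 2)).div (hasDerivAt_id t) ht :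
    HasDerivAt (fun s : ℝ => 5 / 2 / s) _ t)
  have := (h1.sub h2).sub h3
  refine this.congr_deriv ?_
  unfold dftt
  field_simp
  ring

/-! ### Eventual conditions -/

lemma ev_x (hx : x ≠ 0) (hq : x ^ 2 - 2 * t ≠ 0) :
    ∀ᶠ y in nhds x, y ≠ 0 ∧ y ^ 2 - 2 * t ≠ 0 :=
  (continuousAt_id.eventually_ne hx).and
    (((continuous_pow 2).sub continuous_const).continuousAt.eventually_ne hq)

lemma ev_t (ht : t ≠ 0) (hq : x ^ 2 - 2 * t ≠ 0) :
    ∀ᶠ s in nhds t, s ≠ 0 ∧ x ^ 2 - 2 * s ≠ 0 :=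
  (continuousAt_id.eventually_ne ht).and
    ((continuous_const.sub (continuous_const.mul continuous_id)).continuousAt.eventually_ne hq)

/-! ### Values of the partial derivatives -/

lemma pdxU (hx : x ≠ 0) (ht : t ≠ 0) (hq : x ^ 2 - 2 * t ≠ 0) :
    pdx dwwU x t = dfx x t := by
  have hev : (fun y => dwwU y t) =ᶠ[nhds x] fun y => dwwF y t := by
    filter_upwards [ev_x hx hq] with y hy
    unfold dwwU dwwF
    rw [Real.log_div hy.2 hy.1]
  rw [pdx, hev.deriv_eq, (hF_x hx ht hq).deriv]

lemma pdtU (hx : x ≠ 0) (ht : t ≠ 0) (hq : x ^ 2 - 2 * t ≠ 0) :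
    pdt dwwU x t = dft x t := by
  have hev : (fun s => dwwU x s) =ᶠ[nhds t] fun s => dwwF x s := by
    filter_upwards [ev_t ht hq] with s hs
    unfold dwwU dwwF
    rw [Real.log_div hs.2 hx]
  rw [pdt, hev.deriv_eq, (hF_t ht hq).deriv]

lemma pdxxU (hx : x ≠ 0) (ht : t ≠ 0) (hq : x ^ 2 - 2 * t ≠ 0) :
    pdx (pdx dwwU) x t = dfxx x t := by
  have hev : (fun y => pdx dwwU y t) =ᶠ[nhds x] fun y => dfx y t := by
    filter_upwards [ev_x hx hq] with y hy using pdxU hy.1 ht hy.2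
  rw [pdx, hev.deriv_eq, (hfx_x hx ht hq).deriv]

lemma pdxxxU (hx : x ≠ 0) (ht : t ≠ 0) (hq : x ^ 2 - 2 * t ≠ 0) :
    pdx (pdx (pdx dwwU)) x t = dfxxx x t := by
  have hev : (fun y => pdx (pdx dwwU) y t) =ᶠ[nhds x] fun y => dfxx y t := by
    filter_upwards [ev_x hx hq] with y hy using pdxxU hy.1 ht hy.2
  rw [pdx, hev.deriv_eq, (hfxx_x hx hq).deriv]

lemma pdxxxxU (hx : x ≠ 0) (ht : t ≠ 0) (hq : x ^ 2 - 2 * t ≠ 0) :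
    pdx (pdx (pdx (pdx dwwU))) x t = dfxxxx x t := by
  have hev : (fun y => pdx (pdx (pdx dwwU)) y t) =ᶠ[nhds x] fun y => dfxxx y t := by
    filter_upwards [ev_x hx hq] with y hy using pdxxxU hy.1 ht hy.2
  rw [pdx, hev.deriv_eq, (hfxxx_x hx hq).deriv]

lemma pdttU (hx : x ≠ 0) (ht : t ≠ 0) (hq : x ^ 2 - 2 * t ≠ 0) :
    pdt (pdt dwwU) x t = dftt x t := by
  have hev : (fun s => pdt dwwU x s) =ᶠ[nhds t] fun s => dft x s := by
    filter_upwards [ev_t ht hq] with s hs using pdtU hx hs.1 hs.2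
  rw [pdt, hev.deriv_eq, (hft_t ht hq).deriv]

lemma pdtxU (hx : x ≠ 0) (ht : t ≠ 0) (hq : x ^ 2 - 2 * t ≠ 0) :
    pdt (pdx dwwU) x t = dftx x t := by
  have hev : (fun s => pdx dwwU x s) =ᶠ[nhds t] fun s => dfx x s := by
    filter_upwards [ev_t ht hq] with s hs using pdxU hx hs.1 hs.2
  rw [pdt, hev.deriv_eq, (hfx_t ht hq).deriv]

end Derivs

/-- The rational solution `U = ln(Φ_{2,1}/Φ_{1,1}) + x²/(4t) - (5/2) ln t` of the DWW
equation, with `Φ_{1,1} = x`, `Φ_{2,1} = x² - 2t`. -/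
theorem dww_wronskian_sol_11 :
    ∀ x t : ℝ, 0 < t → x ≠ 0 → x ^ 2 ≠ 2 * t →
      DWWEq (fun x t =>
        Real.log ((x ^ 2 - 2 * t) / x) + x ^ 2 / (4 * t) - (5 / 2) * Real.log t) x t := by
  intro x t ht0 hx hne
  have ht : t ≠ 0 := ne_of_gt ht0
  have hq : x ^ 2 - 2 * t ≠ 0 := sub_ne_zero.mpr hne
  show DWWEq dwwU x t
  rw [DWWEq, pdttU hx ht hq, pdtU hx ht hq, pdxxU hx ht hq, pdxU hx ht hq,
    pdtxU hx ht hq, pdxxxxU hx ht hq]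
  unfold dftt dft dfxx dfx dftx dfxxxx
  field_simp
  ring
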